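/- Let S be a real symmetric positive definite (m-1)×(m-1) matrix and k > 0, and let M = (120·I + 60kS + 12(kS)² + (kS)³)⁻¹(120·I - 60kS + 12(kS)² - (kS)³). Then for every vector U ∈ ℝ^{m-1}, ‖M U‖₂ ≤ ‖U‖₂, so the iterative scheme U_{j+1} = M U_j is unconditionally stable in the ℓ₂ norm. -/

import Mathlib

open Matrix Finset

lemma my_smul_posDef {n : Type*} [Fintype n] [DecidableEq n] {c : ℝ} (hc : 0 < c)
    {A : Matrix n n ℝ} (hA : A.PosDef) : (c • A).PosDef := by
  refine .of_dotProduct_mulVec_pos ?_ fun x hx => ?_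
  · show (c • A)ᴴ = c • A
    rw [conjTranspose_smul, hA.1.eq, star_trivial]
  · simp only [smul_mulVec, dotProduct_smul, smul_eq_mul]
    exact mul_pos hc (hA.dotProduct_mulVec_pos hx)

lemma my_smul_posSemidef {n : Type*} [Fintype n] [DecidableEq n] {c : ℝ} (hc : 0 ≤ c)
    {A : Matrix n n ℝ} (hA : A.PosSemidef) : (c • A).PosSemidef := by
  refine .of_dotProduct_mulVec_nonneg ?_ fun x => ?_
  · show (c • A)ᴴ = c • A
    rw [conjTranspose_smul, hA.1.eq, star_trivial]
  · simp only [smul_mulVec, dotProduct_smul, smul_eq_mul]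
    exact mul_nonneg hc (hA.dotProduct_mulVec_nonneg x)

theorem pade33_iteration_matrix_l2_stable
    {n : Type*} [Fintype n] [DecidableEq n]
    (S : Matrix n n ℝ) (hS : S.PosDef) (k : ℝ) (hk : 0 < k)
    (M : Matrix n n ℝ)
    (hM : M = ((120 : ℝ) • (1 : Matrix n n ℝ) + 60 • (k • S) + 12 • (k • S) ^ 2 + (k • S) ^ 3)⁻¹ *
      ((120 : ℝ) • (1 : Matrix n n ℝ) - 60 • (k • S) + 12 • (k • S) ^ 2 - (k • S) ^ 3))
    (U : n → ℝ) :
    Real.sqrt (∑ i, (M.mulVec U i) ^ 2) ≤ Real.sqrt (∑ i, (U i) ^ 2) := by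
  simp only [← Nat.cast_smul_eq_nsmul ℝ, Nat.cast_ofNat] at hM
  set A := k • S with hAdef
  have hA : A.PosDef := my_smul_posDef hk hS
  set P : Matrix n n ℝ := (120:ℝ) • 1 + (60:ℝ) • A + (12:ℝ) • A^2 + A^3 with hPdef
  set Q : Matrix n n ℝ := (120:ℝ) • 1 - (60:ℝ) • A + (12:ℝ) • A^2 - A^3 with hQdef
  clear_value A P Q
  have hP : P.PosDef := by
    rw [hPdef]
    exact (((my_smul_posDef (by norm_num) Matrix.PosDef.one).add_posSemidef
      (my_smul_posSemidef (by norm_num) hA.posSemidef)).add_posSemidef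
      (my_smul_posSemidef (by norm_num) (hA.posSemidef.pow 2))).add_posSemidef
      (hA.posSemidef.pow 3)
  have hAQ : Commute A Q := by
    rw [hQdef]
    exact ((((Commute.one_right A).smul_right _).sub_right
      ((Commute.refl A).smul_right _)).add_right
      (((Commute.refl A).pow_right 2).smul_right _)).sub_right
      ((Commute.refl A).pow_right 3)
  have hPQ : Commute P Q := by
    rw [hPdef]
    exact ((((Commute.one_left Q).smul_left _).add_left
      (hAQ.smul_left _)).add_left
      ((hAQ.pow_left 2).smul_left _)).add_left (hAQ.pow_left 3)
  letI := hP.isUnit.invertible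
  have hinv : P⁻¹ * Q = Q * P⁻¹ := by
    have h := hPQ.invOf_left
    rwa [invOf_eq_nonsing_inv] at h
  have hQH : Qᴴ = Q := by
    have hAT : Aᵀ = A := by simpa using hA.1.eq
    rw [hQdef]
    simp [conjTranspose_sub, conjTranspose_add, conjTranspose_smul, conjTranspose_pow,
      conjTranspose_one, hAT]
  have hMH : Mᴴ = M := by
    calc Mᴴ = Qᴴ * (P⁻¹)ᴴ := by rw [hM, conjTranspose_mul]
    _ = Q * P⁻¹ := by rw [hQH, hP.inv.1.eq]
    _ = P⁻¹ * Q := hinv.symm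
    _ = M := hM.symm
  have hMT : Mᵀ = M := by simpa using hMH
  have hR : P * P - Q * Q = (28800:ℝ) • A + (3360:ℝ) • A^3 + (48:ℝ) • A^5 := by
    have h1 : P - Q = (120:ℝ) • A + (2:ℝ) • A^3 := by rw [hPdef, hQdef]; module
    have h2 : P + Q = (240:ℝ) • 1 + (24:ℝ) • A^2 := by rw [hPdef, hQdef]; module
    have h3 : (P - Q) * (P + Q) = P * P - Q * Q := by
      have hexp : (P - Q) * (P + Q) = P * P + (P * Q - Q * P) - Q * Q := by noncomm_ring
      rw [hexp, hPQ.eq, sub_self, add_zero]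
    rw [← h3, h1, h2]
    simp only [add_mul, mul_add, smul_mul_smul_comm, smul_mul_assoc, mul_smul_comm, mul_one,
      ← pow_succ, ← pow_succ', ← pow_add]
    norm_num
    module
  have hRpos : (P * P - Q * Q).PosSemidef := by
    rw [hR]
    exact ((my_smul_posSemidef (by norm_num) hA.posSemidef).add
      (my_smul_posSemidef (by norm_num) (hA.posSemidef.pow 3))).add
      (my_smul_posSemidef (by norm_num) (hA.posSemidef.pow 5))
  have hkey : ((1 : Matrix n n ℝ) - M * M).PosSemidef := by
    have e1 : P⁻¹ * (P * P) * P⁻¹ = 1 := by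
      rw [← mul_assoc, Matrix.inv_mul_of_invertible, one_mul,
        Matrix.mul_inv_of_invertible]
    have e2 : M * M = P⁻¹ * (Q * Q) * P⁻¹ := by
      rw [hM]
      calc (P⁻¹ * Q) * (P⁻¹ * Q) = P⁻¹ * (Q * (P⁻¹ * Q)) := by rw [mul_assoc]
      _ = P⁻¹ * (Q * (Q * P⁻¹)) := by rw [hinv]
      _ = P⁻¹ * (Q * Q) * P⁻¹ := by simp only [mul_assoc]
    have hident : (1 : Matrix n n ℝ) - M * M = (P⁻¹)ᴴ * (P * P - Q * Q) * P⁻¹ := by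
      rw [hP.inv.1.eq, mul_sub P⁻¹ (P * P) (Q * Q), sub_mul, e1, ← e2]
    rw [hident]
    exact hRpos.conjTranspose_mul_mul_same P⁻¹
  have h0 := hkey.dotProduct_mulVec_nonneg U
  simp only [sub_mulVec, one_mulVec, dotProduct_sub, star_trivial, ← mulVec_mulVec] at h0
  have hdp : U ⬝ᵥ (M *ᵥ (M *ᵥ U)) = (M *ᵥ U) ⬝ᵥ (M *ᵥ U) := by
    rw [dotProduct_mulVec]
    congr 1
    nth_rewrite 1 [← hMT]
    rw [vecMul_transpose]
  rw [hdp] at h0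
  have hsum1 : ∑ i, (M.mulVec U i) ^ 2 = (M *ᵥ U) ⬝ᵥ (M *ᵥ U) := by
    simp [dotProduct, sq]
  have hsum2 : ∑ i, (U i) ^ 2 = U ⬝ᵥ U := by simp [dotProduct, sq]
  rw [hsum1, hsum2]
  exact Real.sqrt_le_sqrt (by linarith)
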